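/- arXiv:2511.06361 — 13 statements merged into one kernel-verified Lean document; each statement's English description precedes it below -/
import Mathlib

section
/- A law L in a game (A, Δ, P) is gap-free if and only if L is useful, or there is an agent a ∈ A and a safe action of agent a in the law-imposed game (A, Δ^L, P^L). -/
namespace MAS

variable {A α : Type*}

/-- The set of profiles of an action family `Δ`: functions assigning to each
agent `a` an action in `Δ a`. -/
def Profiles (Δ : A → Set α) : Set (A → α) := {δ | ∀ a, δ a ∈ Δ a}

/-- The support set `S(δ)` of a profile `δ`. -/
def supp (δ : A → α) : Set α := Set.range δ

/-- A law in the game: a set of actions `L ⊆ ⋃ a, Δ a`. -/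
def IsLaw (Δ : A → Set α) (L : Set α) : Prop := L ⊆ ⋃ a, Δ a

/-- The law-imposed action sets `Δ_a^L = Δ_a \ L`. -/
def lawActions (Δ : A → Set α) (L : Set α) : A → Set α := fun a => Δ a \ L

/-- The law-imposed prohibition `P^L = P ∩ ∏ Δ^L`. -/
def lawProhib (Δ : A → Set α) (P : Set (A → α)) (L : Set α) : Set (A → α) :=
  P ∩ Profiles (lawActions Δ L)

/-- A law `L` is useful if `P^L = ∅` in the law-imposed game. -/
def Useful (Δ : A → Set α) (P : Set (A → α)) (L : Set α) : Prop :=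
  lawProhib Δ P L = ∅

/-- An action `d` is a safe action of agent `a` in the game `(A, Δ, P)` if
`d ∈ Δ a` and `δ a ≠ d` for every prohibited profile `δ ∈ P`. -/
def SafeAction (Δ : A → Set α) (P : Set (A → α)) (a : A) (d : α) : Prop :=
  d ∈ Δ a ∧ ∀ δ ∈ P, δ a ≠ d

/-- In a prohibited profile `δ ∈ P`, agent `a` is responsible under law `L` if
`δ a ∈ L` (legally), or `S(δ) ∩ L = ∅` and a safe action of agent `a` exists in
the law-imposed game (counterfactually). -/
def Responsible (Δ : A → Set α) (P : Set (A → α)) (L : Set α) (δ : A → α) (a : A) : Prop :=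
  δ a ∈ L ∨ (supp δ ∩ L = ∅ ∧ ∃ d, SafeAction (lawActions Δ L) (lawProhib Δ P L) a d)

/-- A law `L` is gap-free if in each prohibited profile there is at least one
responsible agent. -/
def GapFree (Δ : A → Set α) (P : Set (A → α)) (L : Set α) : Prop :=
  ∀ δ ∈ P, ∃ a, Responsible Δ P L δ a

/-- An action `d` is safable if there is a law `L` and an agent `a` such that
`d` is a safe action of agent `a` in the law-imposed game. -/
def Safable (Δ : A → Set α) (P : Set (A → α)) (d : α) : Prop :=
  ∃ L, IsLaw Δ L ∧ ∃ a, SafeAction (lawActions Δ L) (lawProhib Δ P L) a d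

/-- `C` is a vertex cover of the hypergraph `(V, E)`. -/
def IsVC (V : Set α) (E : Set (Set α)) (C : Set α) : Prop :=
  C ⊆ V ∧ ∀ e ∈ E, (C ∩ e).Nonempty

/-- A minimal vertex cover. -/
def MinimalVC (V : Set α) (E : Set (Set α)) (C : Set α) : Prop :=
  IsVC V E C ∧ ∀ C', C' ⊂ C → ¬ IsVC V E C'

/-- A minimal gap-free law: a gap-free law no strict subset of which is gap-free. -/
def MinimalGapFree (Δ : A → Set α) (P : Set (A → α)) (L : Set α) : Prop :=
  GapFree Δ P L ∧ ∀ L', L' ⊂ L → ¬ GapFree Δ P L'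

/-- `S(P) = {S(δ) : δ ∈ P}`. -/
def suppSet (P : Set (A → α)) : Set (Set α) := (fun δ => supp δ) '' P

/-- The edge set `E^C = {C ∩ e : e ∈ E}` of the induced subgraph. -/
def inducedEdges (E : Set (Set α)) (C : Set α) : Set (Set α) := (fun e => C ∩ e) '' E

/-- The vertex set `(⋃ Δ) \ {d}` of the hypergraph `H^{a,d}`. -/
def Hvertices (Δ : A → Set α) (d : α) : Set α := (⋃ a, Δ a) \ {d}

/-- The edge set `{S(δ) \ {d} : δ ∈ P, δ a = d}` of the hypergraph `H^{a,d}`. -/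
def Hedges (P : Set (A → α)) (a : A) (d : α) : Set (Set α) :=
  (fun δ => supp δ \ {d}) '' {δ ∈ P | δ a = d}

/-- A law `L` in a game `(A, Δ, P)` is gap-free if and only if `L`
is useful, or there is an agent `a ∈ A` and a safe action of agent `a` in the
law-imposed game `(A, Δ^L, P^L)`. -/
theorem gapFree_iff {A α : Type*} [Fintype A] [Nonempty A]
    (Δ : A → Set α) (P : Set (A → α))
    (hΔfin : ∀ a, (Δ a).Finite) (hP : P ⊆ Profiles Δ)
    (L : Set α) (hL : IsLaw Δ L) :
    GapFree Δ P L ↔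
      Useful Δ P L ∨
        ∃ a d, SafeAction (lawActions Δ L) (lawProhib Δ P L) a d := by
  constructor
  · intro hgf
    by_cases hu : Useful Δ P L
    · exact Or.inl hu
    · right
      rw [Useful, Set.eq_empty_iff_forall_notMem] at hu
      push_neg at hu
      obtain ⟨δ, hδP, hδΔ⟩ := hu
      obtain ⟨a, ha⟩ := hgf δ hδP
      rcases ha with h | ⟨_, d, hd⟩
      · exact absurd h (hδΔ a).2
      · exact ⟨a, d, hd⟩
  · rintro (hu | ⟨a, d, hd⟩) δ hδP
    · by_cases h : ∃ a, δ a ∈ L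
      · obtain ⟨a, ha⟩ := h
        exact ⟨a, Or.inl ha⟩
      · push_neg at h
        exfalso
        have : δ ∈ lawProhib Δ P L := ⟨hδP, fun a => ⟨hP hδP a, h a⟩⟩
        rw [hu] at this
        exact this
    · by_cases h : ∃ a, δ a ∈ L
      · obtain ⟨a, ha⟩ := h
        exact ⟨a, Or.inl ha⟩
      · push_neg at h
        refine ⟨a, Or.inr ⟨?_, d, hd⟩⟩
        rw [Set.eq_empty_iff_forall_notMem]
        rintro x ⟨⟨b, rfl⟩, hxL⟩
        exact h b hxL

end MAS
end

section
/- Let (V, E) be a k-graph and let the game G_{(k,V,E)} be constructed from it. Then a set C is a vertex cover of the k-graph (V, E) if and only if C is a useful law in the game G_{(k,V,E)}. -/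
namespace MAS

variable {A α : Type*}

/-- Let `(V, E)` be a `k`-graph and let the game `G_{(k,V,E)}` be
constructed from it (agents `[k]`, action set `V` for each agent, and prohibition
`{δ^e : e ∈ E}` where `S(δ^e) = e`). Then a set `C` is a vertex cover of the
`k`-graph `(V, E)` if and only if `C` is a useful law in the game `G_{(k,V,E)}`. -/
theorem isVC_iff_usefulLaw {α : Type*} (k : ℕ) (hk : 1 ≤ k)
    (V : Set α) (E : Set (Set α)) (hV : V.Finite)
    (hE : ∀ e ∈ E, e ⊆ V ∧ 1 ≤ e.ncard ∧ e.ncard ≤ k)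
    (f : Set α → (Fin k → α)) (hf : ∀ e ∈ E, Set.range (f e) = e)
    (C : Set α) :
    IsVC V E C ↔
      (IsLaw (fun _ : Fin k => V) C ∧ Useful (fun _ : Fin k => V) (f '' E) C) := by
  constructor
  · rintro ⟨hCV, hcov⟩
    have hlaw : IsLaw (fun _ : Fin k => V) C := by
      intro x hx
      exact Set.mem_iUnion.mpr ⟨⟨0, hk⟩, hCV hx⟩
    refine ⟨hlaw, ?_⟩
    rw [Useful, Set.eq_empty_iff_forall_notMem]
    rintro δ ⟨⟨e, heE, rfl⟩, hδ⟩
    obtain ⟨x, hxC, hxe⟩ := hcov e heE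
    rw [← hf e heE] at hxe
    obtain ⟨i, hi⟩ := hxe
    exact (hδ i).2 (hi ▸ hxC)
  · rintro ⟨hlaw, huse⟩
    have hCV : C ⊆ V := by
      intro x hx
      obtain ⟨_, ⟨_, rfl⟩, hxV⟩ := hlaw hx
      exact hxV
    refine ⟨hCV, fun e heE => ?_⟩
    by_contra hne
    rw [Set.not_nonempty_iff_eq_empty] at hne
    have : f e ∈ lawProhib (fun _ : Fin k => V) (f '' E) C := by
      refine ⟨⟨e, heE, rfl⟩, fun i => ?_⟩
      have hmem : f e i ∈ Set.range (f e) := ⟨i, rfl⟩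
      rw [hf e heE] at hmem
      refine ⟨(hE e heE).1 hmem, fun hC => ?_⟩
      exact Set.eq_empty_iff_forall_notMem.mp hne (f e i) ⟨hC, hmem⟩
    rw [huse] at this
    exact this

end MAS
end

section
/- Let (V, E) be a k-graph and let the game G_{(k,V,E)} be constructed from it. Then a set C is a vertex cover of the k-graph (V, E) if and only if C is a useful reduction of the law V in the game G_{(k,V,E)}. -/
namespace MAS

variable {A α : Type*}

/-- Let `(V, E)` be a `k`-graph and let the game `G_{(k,V,E)}` be
constructed from it. Then a set `C` is a vertex cover of the `k`-graph `(V, E)`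
if and only if `C` is a useful reduction of the law `V` in the game `G_{(k,V,E)}`,
i.e. a useful law contained in `V`. -/
theorem isVC_iff_usefulReduction {α : Type*} (k : ℕ) (hk : 1 ≤ k)
    (V : Set α) (E : Set (Set α)) (hV : V.Finite)
    (hE : ∀ e ∈ E, e ⊆ V ∧ 1 ≤ e.ncard ∧ e.ncard ≤ k)
    (f : Set α → (Fin k → α)) (hf : ∀ e ∈ E, Set.range (f e) = e)
    (C : Set α) :
    IsVC V E C ↔
      (IsLaw (fun _ : Fin k => V) C ∧ Useful (fun _ : Fin k => V) (f '' E) C ∧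
        C ⊆ V) := by
  have hne : Nonempty (Fin k) := ⟨⟨0, hk⟩⟩
  have hU : (⋃ _ : Fin k, V) = V := Set.iUnion_const V
  constructor
  · rintro ⟨hCV, hcov⟩
    refine ⟨by rw [IsLaw, hU]; exact hCV, ?_, hCV⟩
    rw [Useful, Set.eq_empty_iff_forall_notMem]
    rintro δ ⟨⟨e, he, rfl⟩, hprof⟩
    obtain ⟨v, hvC, hve⟩ := hcov e he
    rw [← hf e he] at hve
    obtain ⟨i, rfl⟩ := hve
    exact (hprof i).2 hvC
  · rintro ⟨-, hU2, hCV⟩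
    refine ⟨hCV, fun e he => ?_⟩
    by_contra hcon
    rw [Set.not_nonempty_iff_eq_empty] at hcon
    have : f e ∈ lawProhib (fun _ : Fin k => V) (f '' E) C := by
      refine ⟨Set.mem_image_of_mem f he, fun i => ?_⟩
      have hi : f e i ∈ e := by
        have := Set.mem_range_self (f := f e) i
        rwa [hf e he] at this
      exact ⟨(hE e he).1 hi, fun hiC => Set.eq_empty_iff_forall_notMem.mp hcon _ ⟨hiC, hi⟩⟩
    rw [Useful] at hU2
    simpa [hU2] using this

end MAS
end

section
/- A set L is a useful law in a game (A, Δ, P) if and only if L is a vertex cover of the hypergraph (⋃Δ, S(P)), where S(P) = {S(δ) : δ ∈ P}. -/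
namespace MAS

variable {A α : Type*}

/-- A set `L` is a useful law in a game `(A, Δ, P)` if and only if
`L` is a vertex cover of the hypergraph `(⋃Δ, S(P))`. -/
theorem usefulLaw_iff_isVC {A α : Type*} [Fintype A] [Nonempty A]
    (Δ : A → Set α) (P : Set (A → α))
    (hΔfin : ∀ a, (Δ a).Finite) (hP : P ⊆ Profiles Δ)
    (L : Set α) :
    (IsLaw Δ L ∧ Useful Δ P L) ↔ IsVC (⋃ a, Δ a) (suppSet P) L := by
  constructor
  · rintro ⟨hL, hU⟩
    refine ⟨hL, ?_⟩
    rintro e ⟨δ, hδP, rfl⟩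
    by_contra h
    rw [Set.not_nonempty_iff_eq_empty] at h
    have : δ ∈ lawProhib Δ P L := by
      refine ⟨hδP, fun a => ⟨hP hδP a, fun hLa => ?_⟩⟩
      have : δ a ∈ (L ∩ supp δ) := ⟨hLa, ⟨a, rfl⟩⟩
      simp [h] at this
    rw [hU] at this
    exact this
  · rintro ⟨hL, hVC⟩
    refine ⟨hL, ?_⟩
    ext δ
    simp only [Set.mem_empty_iff_false, iff_false]
    rintro ⟨hδP, hprof⟩
    obtain ⟨x, hxL, a, rfl⟩ := hVC (supp δ) ⟨δ, hδP, rfl⟩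
    exact (hprof a).2 hxL

end MAS
end

section
/- For a useful law L in a game (A, Δ, P), a law L' is a useful reduction of L if and only if L' is a vertex cover of the induced subgraph (L, S(P)^L), where S(P)^L = {L ∩ S(δ) : δ ∈ P}. -/
namespace MAS

variable {A α : Type*}

/-- For a useful law `L` in a game `(A, Δ, P)`, a law `L'` is a
useful reduction of `L` if and only if `L'` is a vertex cover of the induced
subgraph `(L, S(P)^L)`, where `S(P)^L = {L ∩ S(δ) : δ ∈ P}`. -/
theorem usefulReduction_iff_isVC {A α : Type*} [Fintype A] [Nonempty A]
    (Δ : A → Set α) (P : Set (A → α))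
    (hΔfin : ∀ a, (Δ a).Finite) (hP : P ⊆ Profiles Δ)
    (L : Set α) (hL : IsLaw Δ L) (hLuseful : Useful Δ P L)
    (L' : Set α) (hL' : IsLaw Δ L') :
    (Useful Δ P L' ∧ L' ⊆ L) ↔ IsVC L (inducedEdges (suppSet P) L) L' := by
  have key : ∀ (M : Set α), Useful Δ P M ↔ ∀ δ ∈ P, ∃ a, δ a ∈ M := by
    intro M
    constructor
    · intro h δ hδ
      by_contra hc
      push_neg at hc
      have : δ ∈ lawProhib Δ P M :=
        ⟨hδ, fun a => ⟨hP hδ a, hc a⟩⟩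
      rw [h] at this
      exact this
    · intro h
      ext δ
      simp only [Set.mem_empty_iff_false, iff_false]
      rintro ⟨hδ, hprof⟩
      obtain ⟨a, ha⟩ := h δ hδ
      exact (hprof a).2 ha
  constructor
  · rintro ⟨hU, hsub⟩
    refine ⟨hsub, ?_⟩
    rintro e ⟨s, ⟨δ, hδ, rfl⟩, rfl⟩
    obtain ⟨a, ha⟩ := (key L').mp hU δ hδ
    exact ⟨δ a, ha, hsub ha, ⟨a, rfl⟩⟩
  · rintro ⟨hsub, hcov⟩
    refine ⟨(key L').mpr ?_, hsub⟩
    intro δ hδ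
    obtain ⟨x, hx1, _, a, rfl⟩ := hcov (L ∩ supp δ) ⟨supp δ, ⟨δ, hδ, rfl⟩, rfl⟩
    exact ⟨a, hx1⟩

end MAS
end

section
/- Let (A, Δ, P) be a game, γ ∉ A a fresh agent, and p, n two distinct fresh actions not in ⋃Δ, and let (Ā, Δ̄, P̄) be the game constructed from these data. Then a set L ⊆ ⋃Δ is a useful law in the game (A, Δ, P) if and only if L is a gap-free law in the game (Ā, Δ̄, P̄). -/
namespace MAS

variable {A α : Type*}

variable {A α : Type*}

/-- The action sets of the game `(Ā, Δ̄, P̄)`: the fresh agent `γ` is modelled as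
`none : Option A`, with `Δ̄_γ = {p, n}` and `Δ̄_a = Δ_a ∪ {n}` for `a ∈ A`. -/
def barActions (Δ : A → Set α) (p n : α) : Option A → Set α
  | some a => Δ a ∪ {n}
  | none => {p, n}

/-- The prohibition `P̄ = P̄₁ ∪ P̄₂ ∪ P̄₃` of the game `(Ā, Δ̄, P̄)`. -/
def barProhibition (Δ : A → Set α) (P : Set (A → α)) (p n : α) : Set (Option A → α) :=
  {δ' | δ' none = p ∧ ∃ δ ∈ P, ∀ a : A, δ' (some a) = δ a} ∪
    {δ' | ∃ a : A, δ' (some a) ∈ Δ a ∧ ∀ b : Option A, b ≠ some a → δ' b = n} ∪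
    {δ' | ∀ b : Option A, δ' b = n}

/-- Let `(A, Δ, P)` be a game, `γ ∉ A` a fresh agent (modelled as
`none : Option A`), and `p, n` two distinct fresh actions not in `⋃Δ`. Then a
set `L ⊆ ⋃Δ` is a useful law in the game `(A, Δ, P)` if and only if `L` is a
gap-free law in the game `(Ā, Δ̄, P̄)`. -/
theorem useful_iff_bar_gapFree {A α : Type*} [Fintype A] [Nonempty A]
    (Δ : A → Set α) (P : Set (A → α))
    (hΔfin : ∀ a, (Δ a).Finite) (hP : P ⊆ Profiles Δ)
    (p n : α) (hpn : p ≠ n) (hp : p ∉ ⋃ a, Δ a) (hn : n ∉ ⋃ a, Δ a)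
    (L : Set α) (hL : L ⊆ ⋃ a, Δ a) :
    Useful Δ P L ↔ GapFree (barActions Δ p n) (barProhibition Δ P p n) L := by
  classical
  have hpL : p ∉ L := fun h => hp (hL h)
  have hnL : n ∉ L := fun h => hn (hL h)
  constructor
  · intro hU
    have hsafe : SafeAction (lawActions (barActions Δ p n) L)
        (lawProhib (barActions Δ p n) (barProhibition Δ P p n) L) (none : Option A) p := by
      refine ⟨⟨Or.inl rfl, hpL⟩, ?_⟩
      rintro δ'' ⟨hP'', hprof⟩ hnone
      rcases hP'' with (⟨-, δ, hδP, hrest⟩ | ⟨a, -, hothers⟩) | h3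
      · refine Set.eq_empty_iff_forall_notMem.1 hU δ ⟨hδP, fun a => ⟨hP hδP a, ?_⟩⟩
        have h := hprof (some a)
        rw [hrest a] at h
        exact h.2
      · exact hpn (hnone.symm.trans (hothers none (by simp)))
      · exact hpn (hnone.symm.trans (h3 none))
    intro δ' hδ'
    rcases hδ' with (⟨hnp, δ, hδP, hrest⟩ | ⟨a, haΔ, hothers⟩) | h3
    · have hex : ∃ a, δ a ∈ L := by
        by_contra h
        push_neg at h
        exact Set.eq_empty_iff_forall_notMem.1 hU δ ⟨hδP, fun a => ⟨hP hδP a, h a⟩⟩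
      obtain ⟨a, haL⟩ := hex
      exact ⟨some a, Or.inl (by rw [hrest a]; exact haL)⟩
    · by_cases hc : δ' (some a) ∈ L
      · exact ⟨some a, Or.inl hc⟩
      · refine ⟨none, Or.inr ⟨?_, p, hsafe⟩⟩
        refine Set.eq_empty_iff_forall_notMem.2 ?_
        rintro x ⟨⟨b, rfl⟩, hxL⟩
        by_cases hb : b = some a
        · exact hc (hb ▸ hxL)
        · rw [hothers b hb] at hxL; exact hnL hxL
    · refine ⟨none, Or.inr ⟨?_, p, hsafe⟩⟩
      refine Set.eq_empty_iff_forall_notMem.2 ?_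
      rintro x ⟨⟨b, rfl⟩, hxL⟩
      rw [h3 b] at hxL; exact hnL hxL
  · intro hGF
    rw [Useful, Set.eq_empty_iff_forall_notMem]
    rintro δ ⟨hδP, hδprof⟩
    set δ' : Option A → α := fun b => Option.elim b p δ with hδ'def
    have hδ'bar : δ' ∈ barProhibition Δ P p n :=
      Or.inl (Or.inl ⟨rfl, δ, hδP, fun a => rfl⟩)
    have hδ'law : δ' ∈ lawProhib (barActions Δ p n) (barProhibition Δ P p n) L := by
      refine ⟨hδ'bar, fun b => ?_⟩
      cases b with
      | none => exact ⟨Or.inl rfl, hpL⟩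
      | some a => exact ⟨Or.inl (hδprof a).1, (hδprof a).2⟩
    have hnlaw : (fun _ : Option A => n) ∈
        lawProhib (barActions Δ p n) (barProhibition Δ P p n) L := by
      refine ⟨Or.inr (fun b => rfl), fun b => ?_⟩
      cases b with
      | none => exact ⟨Or.inr rfl, hnL⟩
      | some a => exact ⟨Or.inr rfl, hnL⟩
    obtain ⟨b, hb⟩ := hGF δ' hδ'bar
    rcases hb with hlegal | ⟨-, d, ⟨hdmem, hdL⟩, hdsafe⟩
    · cases b with
      | none => exact hpL hlegal
      | some a => exact (hδprof a).2 hlegal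
    · cases b with
      | none =>
        rcases hdmem with rfl | rfl
        · exact hdsafe δ' hδ'law rfl
        · exact hdsafe _ hnlaw rfl
      | some a =>
        rcases hdmem with hdΔ | rfl
        · set σ : Option A → α := fun b => if b = some a then d else n with hσ
          have hσbar : σ ∈ barProhibition Δ P p n := by
            refine Or.inl (Or.inr ⟨a, ?_, fun b hb => ?_⟩)
            · simpa [hσ] using hdΔ
            · simp [hσ, hb]
          have hσlaw : σ ∈ lawProhib (barActions Δ p n) (barProhibition Δ P p n) L := by
            refine ⟨hσbar, fun b => ?_⟩
            by_cases hb : b = some a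
            · subst hb
              simp only [hσ, if_pos rfl]
              exact ⟨Or.inl hdΔ, hdL⟩
            · cases b with
              | none => simp only [hσ, if_neg hb]; exact ⟨Or.inr rfl, hnL⟩
              | some c => simp only [hσ, if_neg hb]; exact ⟨Or.inr rfl, hnL⟩
          exact hdsafe σ hσlaw (by simp [hσ])
        · exact hdsafe _ hnlaw rfl

end MAS
end

section
/- Let (A, Δ, P) be a game, γ ∉ A a fresh agent, and p, n two distinct fresh actions not in ⋃Δ, and let (Ā, Δ̄, P̄) be the game constructed from these data. For a useful law L in the game (A, Δ, P), a set L' is a useful reduction of L in the game (A, Δ, P) if and only if L' is a gap-free reduction of L in the game (Ā, Δ̄, P̄). -/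
namespace MAS

variable {A α : Type*}

variable {A α : Type*}

/-- Let `(A, Δ, P)` be a game, `γ ∉ A` a fresh agent (modelled as
`none : Option A`), and `p, n` two distinct fresh actions not in `⋃Δ`. For a
useful law `L` in the game `(A, Δ, P)`, a set `L'` is a useful reduction of `L`
in `(A, Δ, P)` (i.e. a useful law `L' ⊆ L`) if and only if `L'` is a gap-free
reduction of `L` in the game `(Ā, Δ̄, P̄)` (i.e. a gap-free law `L' ⊆ L`). -/
theorem usefulReduction_iff_bar_gapFreeReduction {A α : Type*} [Fintype A] [Nonempty A]
    (Δ : A → Set α) (P : Set (A → α))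
    (hΔfin : ∀ a, (Δ a).Finite) (hP : P ⊆ Profiles Δ)
    (p n : α) (hpn : p ≠ n) (hp : p ∉ ⋃ a, Δ a) (hn : n ∉ ⋃ a, Δ a)
    (L : Set α) (hL : L ⊆ ⋃ a, Δ a) (hLuseful : Useful Δ P L)
    (L' : Set α) :
    (L' ⊆ L ∧ Useful Δ P L') ↔
      (L' ⊆ L ∧ GapFree (barActions Δ p n) (barProhibition Δ P p n) L') := by
  classical
  constructor
  · rintro ⟨hsub, huse⟩
    have hpL' : p ∉ L' := fun h => hp (hL (hsub h))
    have hnL' : n ∉ L' := fun h => hn (hL (hsub h))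
    refine ⟨hsub, ?_⟩
    have safeP : SafeAction (lawActions (barActions Δ p n) L')
        (lawProhib (barActions Δ p n) (barProhibition Δ P p n) L') (none : Option A) p := by
      refine ⟨⟨Or.inl rfl, hpL'⟩, ?_⟩
      rintro δ'' ⟨hmem, hprof⟩ hnp
      rcases hmem with (⟨h1, δ, hδP, hres⟩ | ⟨a, hd, hall⟩) | hall
      · have hδmem : δ ∈ lawProhib Δ P L' := by
          refine ⟨hδP, fun a => ?_⟩
          have h2 := hprof (some a)
          rw [hres a] at h2
          exact ⟨hP hδP a, h2.2⟩
        rw [huse] at hδmem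
        exact hδmem
      · have h2 := hall none (by simp)
        rw [hnp] at h2
        exact hpn h2
      · have h2 := hall none
        rw [hnp] at h2
        exact hpn h2
    intro δ' hδ'
    rcases hδ' with (⟨hnone, δ, hδP, hres⟩ | ⟨a, hd, hall⟩) | hall
    · -- P̄₁ : some original agent is legally responsible
      have hδnot : δ ∉ lawProhib Δ P L' := by rw [huse]; exact not_false
      have : ∃ a, δ a ∈ L' := by
        by_contra h
        push_neg at h
        exact hδnot ⟨hδP, fun a => ⟨hP hδP a, h a⟩⟩
      obtain ⟨a, ha⟩ := this
      exact ⟨some a, Or.inl ((hres a).symm ▸ ha)⟩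
    · -- P̄₂
      by_cases hdl : δ' (some a) ∈ L'
      · exact ⟨some a, Or.inl hdl⟩
      · refine ⟨none, Or.inr ⟨?_, p, safeP⟩⟩
        apply Set.eq_empty_iff_forall_notMem.2
        rintro x ⟨⟨b, rfl⟩, hxL⟩
        by_cases hb : b = some a
        · exact hdl (hb ▸ hxL)
        · rw [hall b hb] at hxL
          exact hnL' hxL
    · -- P̄₃
      refine ⟨none, Or.inr ⟨?_, p, safeP⟩⟩
      apply Set.eq_empty_iff_forall_notMem.2
      rintro x ⟨⟨b, rfl⟩, hxL⟩
      rw [hall b] at hxL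
      exact hnL' hxL
  · rintro ⟨hsub, hgf⟩
    have hpL' : p ∉ L' := fun h => hp (hL (hsub h))
    have hnL' : n ∉ L' := fun h => hn (hL (hsub h))
    refine ⟨hsub, ?_⟩
    set δ₃ : Option A → α := fun _ => n with hδ₃
    have hδ₃P : δ₃ ∈ barProhibition Δ P p n := Or.inr (fun b => rfl)
    have hδ₃law : δ₃ ∈ lawProhib (barActions Δ p n) (barProhibition Δ P p n) L' := by
      refine ⟨hδ₃P, fun b => ⟨?_, hnL'⟩⟩
      cases b with
      | none => exact Or.inr rfl
      | some a => exact Or.inr rfl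
    obtain ⟨b, hresp⟩ := hgf δ₃ hδ₃P
    rcases hresp with h | ⟨hsupp, d, hdmem, hdsafe⟩
    · exact absurd h hnL'
    · have hnd : n ≠ d := hdsafe δ₃ hδ₃law
      cases b with
      | some a =>
        exfalso
        have hdΔ : d ∈ Δ a := by
          rcases hdmem.1 with h | h
          · exact h
          · exact absurd h.symm hnd
        set δ₂ : Option A → α := fun o => if o = some a then d else n with hδ₂
        have hδ₂P : δ₂ ∈ barProhibition Δ P p n := by
          refine Or.inl (Or.inr ⟨a, ?_, fun b hb => ?_⟩)
          · simpa [hδ₂] using hdΔ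
          · simp [hδ₂, hb]
        have hδ₂law : δ₂ ∈ lawProhib (barActions Δ p n) (barProhibition Δ P p n) L' := by
          refine ⟨hδ₂P, fun b => ?_⟩
          by_cases hb : b = some a
          · subst hb
            exact ⟨Or.inl (by simpa [hδ₂] using hdΔ), by simpa [hδ₂] using hdmem.2⟩
          · refine ⟨?_, by simpa [hδ₂, hb] using hnL'⟩
            cases b with
            | none =>
              have h3 : δ₂ none = n := by simp [hδ₂]
              rw [h3]; exact Or.inr rfl
            | some a' => exact Or.inr (by simp [hδ₂, hb])
        exact hdsafe δ₂ hδ₂law (by simp [hδ₂])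
      | none =>
        have hdp : d = p := by
          rcases hdmem.1 with h | h
          · exact h
          · exact absurd h.symm hnd
        rw [hdp] at hdsafe
        apply Set.eq_empty_iff_forall_notMem.2
        rintro δ ⟨hδP, hδprof⟩
        set δ' : Option A → α := fun o => o.elim p δ with hδ'
        have hδ'P : δ' ∈ barProhibition Δ P p n :=
          Or.inl (Or.inl ⟨rfl, δ, hδP, fun a => rfl⟩)
        have hδ'law : δ' ∈ lawProhib (barActions Δ p n) (barProhibition Δ P p n) L' := by
          refine ⟨hδ'P, fun b => ?_⟩
          cases b with
          | none => exact ⟨Or.inl rfl, hpL'⟩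
          | some a => exact ⟨Or.inl (hP hδP a), (hδprof a).2⟩
        exact hdsafe δ' hδ'law rfl

end MAS
end

section
/- For a game (A, Δ, P), an action d ∈ ⋃Δ is safable if and only if S(δ) ≠ {d} for each profile δ ∈ P. -/
namespace MAS

variable {A α : Type*}

/-- For a game `(A, Δ, P)`, an action `d ∈ ⋃Δ` is safable if and
only if `S(δ) ≠ {d}` for each profile `δ ∈ P`. -/
theorem safable_iff {A α : Type*} [Fintype A] [Nonempty A]
    (Δ : A → Set α) (P : Set (A → α))
    (hΔfin : ∀ a, (Δ a).Finite) (hP : P ⊆ Profiles Δ)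
    (d : α) (hd : d ∈ ⋃ a, Δ a) :
    Safable Δ P d ↔ ∀ δ ∈ P, supp δ ≠ {d} := by
  constructor
  · rintro ⟨L, hL, a, hdΔ, hsafe⟩ δ hδ hsupp
    have hδa : δ a = d := by
      have : δ a ∈ supp δ := ⟨a, rfl⟩
      rw [hsupp] at this; exact this
    refine hsafe δ ⟨hδ, fun b => ?_⟩ hδa
    have hδb : δ b = d := by
      have : δ b ∈ supp δ := ⟨b, rfl⟩
      rw [hsupp] at this; exact this
    exact hδb ▸ ⟨hδb ▸ hP hδ b, hdΔ.2⟩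
  · intro h
    obtain ⟨_, ⟨a, rfl⟩, hda⟩ := hd
    refine ⟨(⋃ a, Δ a) \ {d}, Set.diff_subset, a, ⟨hda, fun h' => h'.2 rfl⟩, ?_⟩
    rintro δ ⟨hδP, hδprof⟩ _
    refine h δ hδP ?_
    apply Set.eq_of_subset_of_subset
    · rintro x ⟨b, rfl⟩
      have := hδprof b
      by_contra hne
      exact this.2 ⟨Set.mem_iUnion.2 ⟨b, this.1⟩, hne⟩
    · rintro x rfl
      obtain ⟨b⟩ := ‹Nonempty A›
      have := hδprof b
      by_cases hb : δ b = x
      · exact ⟨b, hb⟩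
      · exact absurd ⟨Set.mem_iUnion.2 ⟨b, this.1⟩, hb⟩ this.2

end MAS
end

section
/- For a law L in a game (A, Δ, P) and an agent a ∈ A, an action d ∈ ⋃Δ is a safe action of agent a in the law-imposed game (A, Δ^L, P^L) if and only if d ∈ Δ_a^L, d is safable in the game (A, Δ, P), and L is a vertex cover of the hypergraph H^{a,d} = ((⋃Δ) \ {d}, {S(δ) \ {d} : δ ∈ P, δ_a = d}). -/
namespace MAS

variable {A α : Type*}

/-- For a law `L` in a game `(A, Δ, P)` and an agent `a ∈ A`, an
action `d ∈ ⋃Δ` is a safe action of agent `a` in the law-imposed game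
`(A, Δ^L, P^L)` if and only if `d ∈ Δ_a^L`, `d` is safable in `(A, Δ, P)`, and
`L` is a vertex cover of the hypergraph
`H^{a,d} = ((⋃Δ) \ {d}, {S(δ) \ {d} : δ ∈ P, δ a = d})`. -/
theorem safeAction_iff_safable_and_isVC {A α : Type*} [Fintype A] [Nonempty A]
    (Δ : A → Set α) (P : Set (A → α))
    (hΔfin : ∀ a, (Δ a).Finite) (hP : P ⊆ Profiles Δ)
    (L : Set α) (hL : IsLaw Δ L) (a : A) (d : α) (hd : d ∈ ⋃ b, Δ b) :
    SafeAction (lawActions Δ L) (lawProhib Δ P L) a d ↔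
      (d ∈ lawActions Δ L a ∧ Safable Δ P d ∧
        IsVC (Hvertices Δ d) (Hedges P a d) L) := by
  constructor
  · rintro h
    obtain ⟨hdΔ, hsafe⟩ := h
    refine ⟨hdΔ, ⟨L, hL, a, hdΔ, hsafe⟩, ?_, ?_⟩
    · intro x hx
      exact ⟨hL hx, fun hxd => hdΔ.2 (hxd ▸ hx)⟩
    · rintro e ⟨δ, ⟨hδP, hδa⟩, rfl⟩
      by_contra hemp
      rw [Set.not_nonempty_iff_eq_empty] at hemp
      have hδL : ∀ b, δ b ∉ L := by
        intro b hbL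
        by_cases hbd : δ b = d
        · exact hdΔ.2 (hbd ▸ hbL)
        · exact Set.eq_empty_iff_forall_notMem.mp hemp (δ b)
            ⟨hbL, ⟨⟨b, rfl⟩, hbd⟩⟩
      exact hsafe δ ⟨hδP, fun b => ⟨hP hδP b, hδL b⟩⟩ hδa
  · rintro ⟨hdΔ, _, hLsub, hcov⟩
    refine ⟨hdΔ, ?_⟩
    rintro δ ⟨hδP, hδprof⟩ hδa
    obtain ⟨x, hxL, hxs, hxd⟩ := hcov (supp δ \ {d}) ⟨δ, ⟨hδP, hδa⟩, rfl⟩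
    obtain ⟨b, rfl⟩ := hxs
    exact (hδprof b).2 hxL

end MAS
end

section
/- A law L in a game (A, Δ, P) is gap-free if and only if at least one of the following is true: (1) L is a vertex cover of the hypergraph (⋃Δ, S(P)); (2) there is an agent a ∈ A and a safable action d ∈ Δ_a^L such that L is a vertex cover of the hypergraph H^{a,d}. -/
namespace MAS

variable {A α : Type*}

/-- A law `L` in a game `(A, Δ, P)` is gap-free if and only if
(1) `L` is a vertex cover of the hypergraph `(⋃Δ, S(P))`, or (2) there is an
agent `a ∈ A` and a safable action `d ∈ Δ_a^L` such that `L` is a vertex cover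
of the hypergraph `H^{a,d}`. -/
theorem gapFree_iff_isVC {A α : Type*} [Fintype A] [Nonempty A]
    (Δ : A → Set α) (P : Set (A → α))
    (hΔfin : ∀ a, (Δ a).Finite) (hP : P ⊆ Profiles Δ)
    (L : Set α) (hL : IsLaw Δ L) :
    GapFree Δ P L ↔
      (IsVC (⋃ a, Δ a) (suppSet P) L ∨
        ∃ a, ∃ d ∈ lawActions Δ L a, Safable Δ P d ∧
          IsVC (Hvertices Δ d) (Hedges P a d) L) := by
  constructor
  · intro hgf
    by_cases hcov : ∀ δ ∈ P, (L ∩ supp δ).Nonempty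
    · exact Or.inl ⟨hL, fun e he => by
        obtain ⟨δ, hδ, rfl⟩ := he; exact hcov δ hδ⟩
    · push_neg at hcov
      obtain ⟨δ₀, hδ₀P, hδ₀⟩ := hcov
      obtain ⟨a, ha⟩ := hgf δ₀ hδ₀P
      rcases ha with h | ⟨hsupp, d, hd⟩
      · exact absurd hδ₀ (Set.nonempty_iff_ne_empty.mp ⟨δ₀ a, h, Set.mem_range_self a⟩)
      · right
        refine ⟨a, d, hd.1, ⟨L, hL, a, hd⟩, ?_, ?_⟩
        · intro x hx
          exact ⟨hL hx, fun hxd => hd.1.2 (by simpa [Set.mem_singleton_iff.mp hxd] using hx)⟩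
        · rintro e ⟨δ, ⟨hδP, hδa⟩, rfl⟩
          have hδn : δ ∉ lawProhib Δ P L := fun hmem => hd.2 δ hmem hδa
          have : ¬ ∀ b, δ b ∈ lawActions Δ L b := fun h => hδn ⟨hδP, h⟩
          push_neg at this
          obtain ⟨b, hb⟩ := this
          have hbL : δ b ∈ L := by
            by_contra hbL
            exact hb ⟨hP hδP b, hbL⟩
          refine ⟨δ b, hbL, Set.mem_range_self b, fun hbd => ?_⟩
          exact hd.1.2 (by rwa [Set.mem_singleton_iff.mp hbd] at hbL)
  · rintro (⟨_, hVC⟩ | ⟨a, d, hdL, _, hL2, hVC⟩) δ hδP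
    · obtain ⟨x, hxL, hxδ⟩ := hVC (supp δ) ⟨δ, hδP, rfl⟩
      obtain ⟨b, rfl⟩ := hxδ
      exact ⟨b, Or.inl hxL⟩
    · by_cases hsupp : (supp δ ∩ L).Nonempty
      · obtain ⟨x, hxδ, hxL⟩ := hsupp
        obtain ⟨b, rfl⟩ := hxδ
        exact ⟨b, Or.inl hxL⟩
      · refine ⟨a, Or.inr ⟨Set.not_nonempty_iff_eq_empty.mp hsupp, d, hdL, ?_⟩⟩
        rintro δ' ⟨hδ'P, hδ'law⟩ hδ'a
        obtain ⟨x, hxL, hxδ', hxd⟩ := hVC (supp δ' \ {d}) ⟨δ', ⟨hδ'P, hδ'a⟩, rfl⟩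
        obtain ⟨b, rfl⟩ := hxδ'
        exact (hδ'law b).2 hxL

end MAS
end

section
/- A gap-free law L in a game (A, Δ, P) is minimal if and only if all of the following are true: (1) if L is a vertex cover of the hypergraph (⋃Δ, S(P)), then L is a minimal vertex cover of this hypergraph; (2) for each agent a ∈ A and each safable action d ∈ Δ_a^L, if L is a vertex cover of the hypergraph H^{a,d}, then L is a minimal vertex cover of this hypergraph; (3) for each agent a ∈ A and each safable action d ∈ Δ_a ∩ L, the set L \ {d} is not a vertex cover of the hypergraph H^{a,d}. -/
namespace MAS

variable {A α : Type*}

lemma mem_lawProhib_iff {Δ : A → Set α} {P : Set (A → α)} (hP : P ⊆ Profiles Δ)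
    {L : Set α} {δ : A → α} :
    δ ∈ lawProhib Δ P L ↔ δ ∈ P ∧ supp δ ∩ L = ∅ := by
  constructor
  · rintro ⟨h1, h2⟩
    refine ⟨h1, Set.eq_empty_iff_forall_notMem.2 ?_⟩
    rintro x ⟨⟨a, rfl⟩, hxL⟩
    exact (h2 a).2 hxL
  · rintro ⟨h1, h2⟩
    refine ⟨h1, fun a => ⟨hP h1 a, fun hmem => ?_⟩⟩
    exact Set.eq_empty_iff_forall_notMem.1 h2 (δ a) ⟨⟨a, rfl⟩, hmem⟩

lemma gapFree_iff_s14 {Δ : A → Set α} {P : Set (A → α)} (hP : P ⊆ Profiles Δ) (L : Set α) :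
    GapFree Δ P L ↔
      (∀ e ∈ suppSet P, (L ∩ e).Nonempty) ∨
      (∃ a d, d ∈ Δ a ∧ d ∉ L ∧ ∀ e ∈ Hedges P a d, (L ∩ e).Nonempty) := by
  constructor
  · intro hgf
    by_cases hcov : ∀ e ∈ suppSet P, (L ∩ e).Nonempty
    · exact Or.inl hcov
    · right
      push_neg at hcov
      obtain ⟨e, ⟨δ0, hδ0P, rfl⟩, hempty⟩ := hcov
      obtain ⟨a, hresp⟩ := hgf δ0 hδ0P
      rcases hresp with hmem | ⟨_, d, ⟨hdΔ, hdL⟩, hsafe⟩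
      · exact absurd hempty (Set.nonempty_iff_ne_empty.1 ⟨δ0 a, hmem, ⟨a, rfl⟩⟩)
      · refine ⟨a, d, hdΔ, hdL, ?_⟩
        rintro e ⟨δ, ⟨hδP, hδa⟩, rfl⟩
        by_contra hne
        have hsupp : supp δ ∩ L = ∅ := by
          apply Set.eq_empty_iff_forall_notMem.2
          rintro x ⟨hxs, hxL⟩
          have hxd : x ≠ d := fun h => hdL (h ▸ hxL)
          exact hne ⟨x, hxL, hxs, hxd⟩
        exact hsafe δ ((mem_lawProhib_iff hP).2 ⟨hδP, hsupp⟩) hδa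
  · rintro (hcov | ⟨a, d, hdΔ, hdL, hcov⟩) δ hδ
    · obtain ⟨x, hxL, b, rfl⟩ := hcov (supp δ) ⟨δ, hδ, rfl⟩
      exact ⟨b, Or.inl hxL⟩
    · by_cases hne : (supp δ ∩ L).Nonempty
      · obtain ⟨x, ⟨b, rfl⟩, hxL⟩ := hne
        exact ⟨b, Or.inl hxL⟩
      · refine ⟨a, Or.inr ⟨Set.not_nonempty_iff_eq_empty.1 hne, d, ⟨hdΔ, hdL⟩, ?_⟩⟩
        intro δ' hδ' hδ'a
        obtain ⟨hδ'P, hsupp⟩ := (mem_lawProhib_iff hP).1 hδ'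
        obtain ⟨x, hxL, hxs, _⟩ := hcov (supp δ' \ {d}) ⟨δ', ⟨hδ'P, hδ'a⟩, rfl⟩
        exact Set.eq_empty_iff_forall_notMem.1 hsupp x ⟨hxs, hxL⟩

lemma safable_of_edges_nonempty {Δ : A → Set α} {P : Set (A → α)} {a : A} {d : α}
    (hdΔ : d ∈ Δ a) (hne : ∀ e ∈ Hedges P a d, e.Nonempty) :
    Safable Δ P d := by
  refine ⟨(⋃ b, Δ b) \ {d}, Set.diff_subset, a,
    ⟨⟨hdΔ, fun h => h.2 rfl⟩, ?_⟩⟩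
  rintro δ ⟨hδP, hδlaw⟩ hδa
  obtain ⟨x, hxs, hxd⟩ := hne (supp δ \ {d}) ⟨δ, ⟨hδP, hδa⟩, rfl⟩
  obtain ⟨b, rfl⟩ := hxs
  have := hδlaw b
  exact hxd (not_not.1 ((not_and_or.1 this.2).resolve_left
    (not_not.2 (Set.mem_iUnion.2 ⟨b, this.1⟩))))

/-- A gap-free law `L` in a game `(A, Δ, P)` is minimal if and
only if (1) if `L` is a vertex cover of `(⋃Δ, S(P))`, then `L` is a minimal
vertex cover of it; (2) for each agent `a ∈ A` and each safable action
`d ∈ Δ_a^L`, if `L` is a vertex cover of `H^{a,d}`, then `L` is a minimal vertex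
cover of it; and (3) for each agent `a ∈ A` and each safable action
`d ∈ Δ_a ∩ L`, the set `L \ {d}` is not a vertex cover of `H^{a,d}`. -/
theorem minimalGapFree_iff {A α : Type*} [Fintype A] [Nonempty A]
    (Δ : A → Set α) (P : Set (A → α))
    (hΔfin : ∀ a, (Δ a).Finite) (hP : P ⊆ Profiles Δ)
    (L : Set α) (hL : IsLaw Δ L) (hgf : GapFree Δ P L) :
    MinimalGapFree Δ P L ↔
      ((IsVC (⋃ a, Δ a) (suppSet P) L → MinimalVC (⋃ a, Δ a) (suppSet P) L) ∧
        (∀ a, ∀ d ∈ lawActions Δ L a, Safable Δ P d →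
          IsVC (Hvertices Δ d) (Hedges P a d) L →
            MinimalVC (Hvertices Δ d) (Hedges P a d) L) ∧
        (∀ a, ∀ d ∈ Δ a ∩ L, Safable Δ P d →
          ¬ IsVC (Hvertices Δ d) (Hedges P a d) (L \ {d}))) := by
  constructor
  · intro hmin
    refine ⟨?_, ?_, ?_⟩
    · intro hvc
      refine ⟨hvc, fun C hC hCvc => hmin.2 C hC ?_⟩
      exact (gapFree_iff_s14 hP C).2 (Or.inl hCvc.2)
    · rintro a d ⟨hdΔ, hdL⟩ _ hvc
      refine ⟨hvc, fun C hC hCvc => hmin.2 C hC ?_⟩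
      exact (gapFree_iff_s14 hP C).2
        (Or.inr ⟨a, d, hdΔ, fun h => hdL (hC.subset h), hCvc.2⟩)
    · rintro a d ⟨hdΔ, hdL⟩ _ hvc
      have hC : L \ {d} ⊂ L :=
        ⟨Set.diff_subset, fun h => (h hdL).2 rfl⟩
      refine hmin.2 (L \ {d}) hC ?_
      exact (gapFree_iff_s14 hP _).2
        (Or.inr ⟨a, d, hdΔ, fun h => h.2 rfl, hvc.2⟩)
  · rintro ⟨h1, h2, h3⟩
    refine ⟨hgf, fun L' hL' hgf' => ?_⟩
    rcases (gapFree_iff_s14 hP L').1 hgf' with hcov | ⟨a, d, hdΔ, hdL', hcov⟩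
    · have hvcL : IsVC (⋃ a, Δ a) (suppSet P) L :=
        ⟨hL, fun e he =>
          (hcov e he).mono (Set.inter_subset_inter_left e hL'.subset)⟩
      exact (h1 hvcL).2 L' hL' ⟨hL'.subset.trans hL, hcov⟩
    · have hsaf : Safable Δ P d :=
        safable_of_edges_nonempty hdΔ (fun e he =>
          Set.Nonempty.mono (Set.inter_subset_right) (hcov e he))
      by_cases hdL : d ∈ L
      · refine h3 a d ⟨hdΔ, hdL⟩ hsaf ?_
        have hL'sub : L' ⊆ L \ {d} :=
          fun x hx => ⟨hL'.subset hx, fun h => hdL' (h ▸ hx)⟩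
        exact ⟨fun x hx => ⟨hL (Set.diff_subset hx), hx.2⟩,
          fun e he => (hcov e he).mono (Set.inter_subset_inter_left e hL'sub)⟩
      · have hLsub : L ⊆ Hvertices Δ d :=
          fun x hx => ⟨hL hx, fun h => hdL (h ▸ hx)⟩
        have hvcL : IsVC (Hvertices Δ d) (Hedges P a d) L :=
          ⟨hLsub, fun e he =>
            (hcov e he).mono (Set.inter_subset_inter_left e hL'.subset)⟩
        exact (h2 a d ⟨hdΔ, hdL⟩ hsaf hvcL).2 L' hL'
          ⟨hL'.subset.trans hLsub, hcov⟩

end MAS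
end

section
/- A gap-free law L in a game (A, Δ, P) is minimal if and only if for each action d ∈ L, the law L \ {d} is not gap-free. -/
namespace MAS

variable {A α : Type*}

/-- If the L'-game has a safe pair avoiding `d` whenever some prohibited profile
misses `L' ∪ {d}`, then `L' ∪ {d}` is gap-free (given `L'` is gap-free). -/
lemma gapFree_union_singleton (Δ : A → Set α) (P : Set (A → α)) (L' : Set α)
    (d : α)
    (hwit : (∃ δ ∈ P, supp δ ∩ (L' ∪ {d}) = ∅) →
      ∃ b f, SafeAction (lawActions Δ L') (lawProhib Δ P L') b f ∧ f ≠ d) :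
    GapFree Δ P L' → GapFree Δ P (L' ∪ {d}) := by
  intro hgf' δ hδ
  by_cases hsupp : supp δ ∩ (L' ∪ {d}) = ∅
  · obtain ⟨b, f, hbf, hfd⟩ := hwit ⟨δ, hδ, hsupp⟩
    refine ⟨b, Or.inr ⟨hsupp, f, ⟨⟨hbf.1.1, ?_⟩, ?_⟩⟩⟩
    · intro hf
      rcases hf with hf | hf
      · exact hbf.1.2 hf
      · exact hfd hf
    · intro δ' hδ'
      refine hbf.2 δ' ⟨hδ'.1, fun a => ⟨hδ'.2 a |>.1, fun h => hδ'.2 a |>.2 (Or.inl h)⟩⟩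
  · rw [Set.eq_empty_iff_forall_notMem] at hsupp
    push_neg at hsupp
    obtain ⟨x, hx, hxL⟩ := hsupp
    obtain ⟨a, rfl⟩ := hx
    exact ⟨a, Or.inl hxL⟩

/-- One-step extension: if `L'` is gap-free and misses two distinct actions of `L`,
then `L'` plus one of them is gap-free. -/
lemma gapFree_step (Δ : A → Set α) (P : Set (A → α)) (L' : Set α)
    (hgf' : GapFree Δ P L') {d₁ d₂ : α} (h₁ : d₁ ∉ L') (h₂ : d₂ ∉ L') (hne : d₁ ≠ d₂) :
    GapFree Δ P (L' ∪ {d₁}) ∨ GapFree Δ P (L' ∪ {d₂}) := by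
  by_cases hc : ∃ b f, SafeAction (lawActions Δ L') (lawProhib Δ P L') b f ∧ f ≠ d₁
  · exact Or.inl (gapFree_union_singleton Δ P L' d₁ (fun _ => hc) hgf')
  · refine Or.inr (gapFree_union_singleton Δ P L' d₂ ?_ hgf')
    rintro ⟨δ, hδ, hsupp⟩
    have hsupp' : supp δ ∩ L' = ∅ := by
      rw [Set.eq_empty_iff_forall_notMem] at hsupp ⊢
      exact fun x hx => hsupp x ⟨hx.1, Or.inl hx.2⟩
    obtain ⟨a, ha⟩ := hgf' δ hδ
    rcases ha with ha | ⟨_, e, he⟩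
    · exfalso
      rw [Set.eq_empty_iff_forall_notMem] at hsupp'
      exact hsupp' (δ a) ⟨⟨a, rfl⟩, ha⟩
    · push_neg at hc
      have : e = d₁ := hc a e he
      exact ⟨a, e, he, this ▸ hne⟩

/-- A gap-free law `L` in a game `(A, Δ, P)` is minimal if and
only if for each action `d ∈ L`, the law `L \ {d}` is not gap-free. -/
theorem minimalGapFree_iff_remove_single {A α : Type*} [Fintype A] [Nonempty A]
    (Δ : A → Set α) (P : Set (A → α))
    (hΔfin : ∀ a, (Δ a).Finite) (hP : P ⊆ Profiles Δ)
    (L : Set α) (hL : IsLaw Δ L) (hgf : GapFree Δ P L) :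
    MinimalGapFree Δ P L ↔ ∀ d ∈ L, ¬ GapFree Δ P (L \ {d}) := by
  constructor
  · intro hmin d hd
    exact hmin.2 (L \ {d}) ⟨Set.diff_subset, fun hsub => (hsub hd).2 rfl⟩
  · intro h
    refine ⟨hgf, ?_⟩
    have hLfin : L.Finite := (Set.Finite.biUnion Set.finite_univ
      (fun a _ => hΔfin a)).subset (fun x hx => by
        obtain ⟨s, ⟨a, rfl⟩, hs⟩ := hL hx
        exact Set.mem_biUnion (Set.mem_univ a) hs)
    have key : ∀ n (L' : Set α), L' ⊂ L → GapFree Δ P L' → (L \ L').ncard ≤ n + 1 →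
        ∃ d ∈ L, GapFree Δ P (L \ {d}) := by
      intro n
      induction n with
      | zero =>
        intro L' hsub hgf' hcard
        obtain ⟨d, hdL, hdL'⟩ := Set.exists_of_ssubset hsub
        have hfin : (L \ L').Finite := hLfin.diff
        have hone : (L \ L').ncard = 1 := le_antisymm hcard
          ((Set.ncard_pos hfin).mpr ⟨d, hdL, hdL'⟩)
        have heq : L \ L' = {d} := by
          obtain ⟨x, hx⟩ := (Set.ncard_eq_one).mp hone
          have hdx : d ∈ ({x} : Set α) := hx ▸ ⟨hdL, hdL'⟩
          rw [hx, hdx]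
        have : L' = L \ {d} := by
          apply Set.eq_of_subset_of_subset
          · intro x hx
            refine ⟨hsub.1 hx, fun hxd => ?_⟩
            rw [Set.mem_singleton_iff] at hxd
            exact hdL' (hxd ▸ hx)
          · intro x hx
            by_contra hxL'
            have : x ∈ L \ L' := ⟨hx.1, hxL'⟩
            rw [heq] at this
            exact hx.2 this
        exact ⟨d, hdL, this ▸ hgf'⟩
      | succ n ih =>
        intro L' hsub hgf' hcard
        have hfin : (L \ L').Finite := hLfin.diff
        by_cases hle : (L \ L').ncard ≤ n + 1
        · exact ih L' hsub hgf' hle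
        · push_neg at hle
          obtain ⟨d₁, d₂, hd₁, hd₂, hne⟩ :=
            (Set.one_lt_ncard_iff hfin).mp (lt_of_lt_of_le (by omega) hle)
          rcases gapFree_step Δ P L' hgf' hd₁.2 hd₂.2 hne with hM | hM
          · refine ih (L' ∪ {d₁}) ?_ hM ?_
            · refine ⟨Set.union_subset hsub.1 (by simpa using hd₁.1), fun hLs => ?_⟩
              rcases hLs hd₂.1 with h' | h'
              · exact hd₂.2 h'
              · exact hne (h'.symm)
            · have : L \ (L' ∪ {d₁}) = (L \ L') \ {d₁} := by
                ext x; simp [and_assoc]; tauto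
              rw [this, Set.ncard_diff_singleton_of_mem hd₁]
              omega
          · refine ih (L' ∪ {d₂}) ?_ hM ?_
            · refine ⟨Set.union_subset hsub.1 (by simpa using hd₂.1), fun hLs => ?_⟩
              rcases hLs hd₁.1 with h' | h'
              · exact hd₁.2 h'
              · exact hne h'
            · have : L \ (L' ∪ {d₂}) = (L \ L') \ {d₂} := by
                ext x; simp [and_assoc]; tauto
              rw [this, Set.ncard_diff_singleton_of_mem hd₂]
              omega
    intro L' hL' hgf'
    obtain ⟨d, hd, hgfd⟩ := key (L \ L').ncard L' hL' hgf' (by omega)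
    exact h d hd hgfd

end MAS
end

section
/- Let L', L be laws in a game (A, Δ, P), let a ∈ A be an agent, and let d ∈ Δ_a^L be a safable action. Then the following are equivalent: (1) L' ⊆ L and d is a safe action of agent a in the law-imposed game (A, Δ^{L'}, P^{L'}); (2) L is a vertex cover of the hypergraph H^{a,d} and L' is a vertex cover of the induced subgraph (L, (E^{a,d})^L), where E^{a,d} is the edge set of H^{a,d}. -/
namespace MAS

variable {A α : Type*}

/-- Let `L', L` be laws in a game `(A, Δ, P)`, let `a ∈ A` be an
agent, and let `d ∈ Δ_a^L` be a safable action. Then `L' ⊆ L` and `d` is a safe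
action of agent `a` in the law-imposed game `(A, Δ^{L'}, P^{L'})` if and only if
`L` is a vertex cover of the hypergraph `H^{a,d}` and `L'` is a vertex cover of
the induced subgraph `(L, (E^{a,d})^L)`. -/
theorem safeReduction_iff_isVC {A α : Type*} [Fintype A] [Nonempty A]
    (Δ : A → Set α) (P : Set (A → α))
    (hΔfin : ∀ a, (Δ a).Finite) (hP : P ⊆ Profiles Δ)
    (L' L : Set α) (hL' : IsLaw Δ L') (hL : IsLaw Δ L)
    (a : A) (d : α) (hd : d ∈ lawActions Δ L a) (hdsaf : Safable Δ P d) :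
    (L' ⊆ L ∧ SafeAction (lawActions Δ L') (lawProhib Δ P L') a d) ↔
      (IsVC (Hvertices Δ d) (Hedges P a d) L ∧
        IsVC L (inducedEdges (Hedges P a d) L) L') := by
  constructor
  · rintro ⟨hsub, hdΔ, hsafe⟩
    obtain ⟨hdΔa, hdL'⟩ := hdΔ
    have key : ∀ δ ∈ P, δ a = d → (L' ∩ (supp δ \ {d})).Nonempty := by
      intro δ hδP hδa
      by_contra hne
      rw [Set.not_nonempty_iff_eq_empty] at hne
      have hδprof : δ ∈ Profiles (lawActions Δ L') := by
        intro b
        refine ⟨hP hδP b, fun hbL' => ?_⟩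
        by_cases hbd : δ b = d
        · exact hdL' (hbd ▸ hbL')
        · have : δ b ∈ L' ∩ (supp δ \ {d}) := ⟨hbL', ⟨b, rfl⟩, hbd⟩
          rw [hne] at this; exact this
      exact hsafe δ ⟨hδP, hδprof⟩ hδa
    refine ⟨⟨?_, ?_⟩, hsub, ?_⟩
    · intro x hxL
      exact ⟨hL hxL, fun hxd => hd.2 (hxd ▸ hxL)⟩
    · rintro e ⟨δ, ⟨hδP, hδa⟩, rfl⟩
      obtain ⟨x, hxL', hxe⟩ := key δ hδP hδa
      exact ⟨x, hsub hxL', hxe⟩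
    · rintro e ⟨_, ⟨δ, ⟨hδP, hδa⟩, rfl⟩, rfl⟩
      obtain ⟨x, hxL', hxe⟩ := key δ hδP hδa
      exact ⟨x, hxL', hsub hxL', hxe⟩
  · rintro ⟨⟨hLV, hLE⟩, hL'L, hL'E⟩
    refine ⟨hL'L, ⟨hd.1, fun hdL' => hd.2 (hL'L hdL')⟩, ?_⟩
    rintro δ ⟨hδP, hδprof⟩ hδa
    have he : L ∩ (supp δ \ {d}) ∈ inducedEdges (Hedges P a d) L :=
      ⟨supp δ \ {d}, ⟨δ, ⟨hδP, hδa⟩, rfl⟩, rfl⟩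
    obtain ⟨x, hxL', _, ⟨b, rfl⟩, _⟩ := hL'E _ he
    exact (hδprof b).2 hxL'


end MAS
end
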